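/- Let X be a normal projective variety of dimension d over a field k and let D = Σ_{i=1}^r a_iE_i be an effective Cartier divisor on X, where the E_i are prime divisors and a_i ∈ ℤ_+. For a prime divisor E and m ∈ ℕ let τ_{E,m}(D) = min{ord_E(Δ) : Δ ∈ |mD|} and γ_E(D) = inf_m τ_{E,m}(D)/m. Then for all m ∈ ℕ, Γ(X, O_X(mD)) = Γ(X, O_X(mD − Σ_{i=1}^r ⌈m·γ_{E_i}(D)⌉E_i)) = Γ(X, O_X(⌊mD − Σ_{i=1}^r m·γ_{E_i}(D)·E_i⌋)). -/
import Mathlib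


universe u

open scoped Classical

/-- The prime (Weil) divisors of a normal projective variety `X` over `k` with function field
`F`, encoded by their order-of-vanishing valuations `ord i` on `F`. -/
structure PrimeDivisors (k F : Type u) [Field k] [Field F] [Algebra k F] where
  /-- the index type of the prime divisors of `X` -/
  ι : Type u
  /-- the discrete valuation `ord_E` given by the order of vanishing along a prime divisor -/
  ord : ι → F → WithTop ℤ
  ord_top : ∀ i x, ord i x = ⊤ ↔ x = 0
  ord_mul : ∀ i x y, ord i (x * y) = ord i x + ord i y
  ord_add : ∀ i x y, min (ord i x) (ord i y) ≤ ord i (x + y)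
  /-- nonzero constants have neither zeros nor poles -/
  ord_const : ∀ i, ∀ c : k, c ≠ 0 → ord i (algebraMap k F c) = 0
  /-- a nonzero rational function has only finitely many zeros and poles -/
  finite_support : ∀ x : F, x ≠ 0 → {i | ord i x ≠ 0}.Finite

variable {k F : Type u} [Field k] [Field F] [Algebra k F]

/-- The space of global sections `Γ(X, O_X(B)) = {f ∈ F ∣ (f) + B ≥ 0} ∪ {0}` of the divisor
`B = Σᵢ bᵢ Eᵢ`. -/
def PrimeDivisors.sections (X : PrimeDivisors k F) (b : X.ι → ℤ) : Submodule k F where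
  carrier := {f | ∀ i, ((-(b i) : ℤ) : WithTop ℤ) ≤ X.ord i f}
  zero_mem' := by
    intro i
    rw [(X.ord_top i 0).mpr rfl]
    exact le_top
  add_mem' := by
    intro x y hx hy i
    exact le_trans (le_min (hx i) (hy i)) (X.ord_add i x y)
  smul_mem' := by
    intro c x hx i
    by_cases hc : c = 0
    · subst hc
      rw [zero_smul, (X.ord_top i 0).mpr rfl]
      exact le_top
    · rw [Algebra.smul_def, X.ord_mul i, X.ord_const i c hc, zero_add]
      exact hx i

/-- `τ_{E,m}(D) = min {ord_E Δ ∣ Δ ∈ |mD|}`: the minimum of `ord_{E_j} f + m a_j` over the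
nonzero `f ∈ Γ(X, O_X(mD))`. -/
noncomputable def PrimeDivisors.tau (X : PrimeDivisors k F) (A : X.ι → ℕ)
    (E : Fin r → X.ι) (a : Fin r → ℕ) (j : Fin r) (m : ℕ) : ℕ :=
  sInf {t : ℕ | ∃ f : F, f ≠ 0 ∧ f ∈ X.sections (fun i => (m * A i : ℤ)) ∧
    X.ord (E j) f = (((t : ℤ) - (m : ℤ) * (a j : ℤ) : ℤ) : WithTop ℤ)}

/-- `γ_E(D) = inf_{m ≥ 1} τ_{E,m}(D)/m`. -/
noncomputable def PrimeDivisors.gammaE (X : PrimeDivisors k F) (A : X.ι → ℕ)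
    (E : Fin r → X.ι) (a : Fin r → ℕ) (j : Fin r) : ℝ :=
  ⨅ m : {m : ℕ // 0 < m}, (X.tau A E a j m : ℝ) / (m : ℝ)


namespace PrimeDivisors

lemma mem_sections' (X : PrimeDivisors k F) {b : X.ι → ℤ} {f : F} :
    f ∈ X.sections b ↔ ∀ i, ((-(b i) : ℤ) : WithTop ℤ) ≤ X.ord i f := Iff.rfl

lemma sections_mono' (X : PrimeDivisors k F) {b b' : X.ι → ℤ} (h : ∀ i, b' i ≤ b i) :
    X.sections b' ≤ X.sections b := fun _ hf i =>
  le_trans (by exact_mod_cast WithTop.coe_le_coe.mpr (neg_le_neg (h i))) (hf i)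

lemma gammaE_nonneg' (X : PrimeDivisors k F) {r : ℕ} (A : X.ι → ℕ)
    (E : Fin r → X.ι) (a : Fin r → ℕ) (j : Fin r) : 0 ≤ X.gammaE A E a j :=
  Real.iInf_nonneg fun _ => div_nonneg (Nat.cast_nonneg _) (Nat.cast_nonneg _)

lemma gammaE_le_tau_div' (X : PrimeDivisors k F) {r : ℕ} (A : X.ι → ℕ)
    (E : Fin r → X.ι) (a : Fin r → ℕ) (j : Fin r) {m : ℕ} (hm : 0 < m) :
    X.gammaE A E a j ≤ (X.tau A E a j m : ℝ) / (m : ℝ) := by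
  have hbdd : BddBelow (Set.range fun p : {m : ℕ // 0 < m} =>
      (X.tau A E a j (p : ℕ) : ℝ) / ((p : ℕ) : ℝ)) := by
    refine ⟨0, ?_⟩
    rintro x ⟨m', rfl⟩
    positivity
  exact ciInf_le hbdd ⟨m, hm⟩

/-- The sum over `j` of an `if E j = i` collapses to at most one term. -/
lemma sum_ite_ceil_eq' {r : ℕ} {ι : Type u} (E : Fin r → ι) (hEinj : Function.Injective E)
    (x : Fin r → ℝ) (i : ι) :
    (∑ j : Fin r, if E j = i then ⌈x j⌉ else 0) =
      ⌈∑ j : Fin r, if E j = i then x j else 0⌉ := by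
  by_cases h : ∃ j, E j = i
  · obtain ⟨j0, hj0⟩ := h
    rw [Finset.sum_eq_single j0
        (fun b _ hb => if_neg fun hbi => hb (hEinj (hbi.trans hj0.symm)))
        (fun h => absurd (Finset.mem_univ j0) h),
      Finset.sum_eq_single j0
        (fun b _ hb => if_neg fun hbi => hb (hEinj (hbi.trans hj0.symm)))
        (fun h => absurd (Finset.mem_univ j0) h),
      if_pos hj0, if_pos hj0]
  · push_neg at h
    rw [Finset.sum_eq_zero fun b _ => if_neg (h b),
      Finset.sum_eq_zero fun b _ => if_neg (h b), Int.ceil_zero]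

end PrimeDivisors

/-- **Lemma 4.1.**  Let `X` be a normal projective variety of dimension `d` over
a field `k` and `D = Σ_{j=1}^r a_j E_j` an effective Cartier divisor on `X`, with the `E_j`
prime divisors and `a_j ∈ ℤ₊`.  Then for all `m ∈ ℕ`,
`Γ(X, O_X(mD)) = Γ(X, O_X(mD - Σ_j ⌈m γ_{E_j}(D)⌉ E_j))
             = Γ(X, O_X(⌊mD - Σ_j m γ_{E_j}(D) E_j⌋))`. -/
theorem sections_eq_sections_sub_gamma
    (d : ℕ) (basis : ∃ x : Fin d → F, IsTranscendenceBasis k x)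
    (X : PrimeDivisors k F)
    (r : ℕ) (E : Fin r → X.ι) (hEinj : Function.Injective E)
    (a : Fin r → ℕ) (hapos : ∀ j, 0 < a j)
    (A : X.ι → ℕ) (hAE : ∀ j, A (E j) = a j) (hA0 : ∀ i, (∀ j, E j ≠ i) → A i = 0) :
    ∀ m : ℕ,
      X.sections (fun i => (m * A i : ℤ)) =
        X.sections (fun i =>
          (m * A i : ℤ) - ∑ j : Fin r, if E j = i then ⌈(m : ℝ) * X.gammaE A E a j⌉ else 0) ∧
      X.sections (fun i =>
          (m * A i : ℤ) - ∑ j : Fin r, if E j = i then ⌈(m : ℝ) * X.gammaE A E a j⌉ else 0) =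
        X.sections (fun i =>
          ⌊((m * A i : ℕ) : ℝ) - ∑ j : Fin r, if E j = i then (m : ℝ) * X.gammaE A E a j
            else 0⌋) := by
  intro m
  have hsum : ∀ i, (∑ j : Fin r, if E j = i then ⌈(m : ℝ) * X.gammaE A E a j⌉ else 0) =
      ⌈∑ j : Fin r, if E j = i then (m : ℝ) * X.gammaE A E a j else 0⌉ :=
    fun i => PrimeDivisors.sum_ite_ceil_eq' E hEinj _ i
  constructor
  · rcases Nat.eq_zero_or_pos m with hm | hm
    · subst hm
      congr 1
      funext i
      simp
    · refine le_antisymm ?_ (X.sections_mono' fun i => by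
        have : 0 ≤ ∑ j : Fin r, if E j = i then ⌈(m : ℝ) * X.gammaE A E a j⌉ else 0 :=
          Finset.sum_nonneg fun j _ => by
            split
            · exact Int.ceil_nonneg (mul_nonneg (Nat.cast_nonneg m)
                (X.gammaE_nonneg' A E a j))
            · exact le_refl 0
        omega)
      intro f hf i
      dsimp only
      by_cases hf0 : f = 0
      · rw [hf0, (X.ord_top i 0).mpr rfl]; exact le_top
      by_cases hi : ∃ j, E j = i
      · obtain ⟨j, rfl⟩ := hi
        have hcol : (∑ j' : Fin r, if E j' = E j then ⌈(m : ℝ) * X.gammaE A E a j'⌉ else 0) =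
            ⌈(m : ℝ) * X.gammaE A E a j⌉ := by
          rw [Finset.sum_eq_single j
            (fun b _ hb => if_neg fun hbi => hb (hEinj hbi))
            (fun h => absurd (Finset.mem_univ j) h), if_pos rfl]
        -- extract the integer value of ord
        have hne : X.ord (E j) f ≠ ⊤ := fun h => hf0 ((X.ord_top (E j) f).mp h)
        obtain ⟨n, hn⟩ := WithTop.ne_top_iff_exists.mp hne
        have hbound : -((m : ℤ) * (A (E j) : ℤ)) ≤ n := by
          have := hf (E j)
          rw [← hn] at this
          exact_mod_cast this
        rw [hAE j] at hbound
        set t : ℕ := (n + (m : ℤ) * (a j : ℤ)).toNat with ht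
        have htz : (t : ℤ) = n + (m : ℤ) * (a j : ℤ) := Int.toNat_of_nonneg (by omega)
        have hmem : t ∈ {t : ℕ | ∃ g : F, g ≠ 0 ∧
            g ∈ X.sections (fun i => (m * A i : ℤ)) ∧
            X.ord (E j) g = (((t : ℤ) - (m : ℤ) * (a j : ℤ) : ℤ) : WithTop ℤ)} := by
          refine ⟨f, hf0, hf, ?_⟩
          rw [← hn]
          congr 1
          omega
        have htau : X.tau A E a j m ≤ t := Nat.sInf_le hmem
        have hgle : (m : ℝ) * X.gammaE A E a j ≤ (t : ℝ) := by
          have h1 : X.gammaE A E a j ≤ (X.tau A E a j m : ℝ) / (m : ℝ) :=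
            X.gammaE_le_tau_div' A E a j hm
          have hm' : (0 : ℝ) < (m : ℝ) := by exact_mod_cast hm
          calc (m : ℝ) * X.gammaE A E a j ≤ (m : ℝ) * ((X.tau A E a j m : ℝ) / (m : ℝ)) :=
                mul_le_mul_of_nonneg_left h1 hm'.le
            _ = (X.tau A E a j m : ℝ) := by field_simp
            _ ≤ (t : ℝ) := by exact_mod_cast htau
        have hceil : ⌈(m : ℝ) * X.gammaE A E a j⌉ ≤ (t : ℤ) := by
          rw [Int.ceil_le]
          exact_mod_cast hgle
        rw [← hn, hcol, hAE j]
        refine (WithTop.coe_le_coe).mpr ?_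
        omega
      · push_neg at hi
        have : (∑ j' : Fin r, if E j' = i then ⌈(m : ℝ) * X.gammaE A E a j'⌉ else 0) = 0 :=
          Finset.sum_eq_zero fun b _ => if_neg (hi b)
        rw [this, sub_zero]
        exact hf i
  · congr 1
    funext i
    rw [hsum i]
    have : ((m * A i : ℕ) : ℝ) - (∑ j : Fin r, if E j = i then (m : ℝ) * X.gammaE A E a j
        else 0) = (-(∑ j : Fin r, if E j = i then (m : ℝ) * X.gammaE A E a j else 0)) +
        ((m * A i : ℤ) : ℝ) := by push_cast; ring
    rw [this, Int.floor_add_intCast, Int.floor_neg]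
    push_cast
    ring
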